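/- arXiv:2405.05383 — 4 statements merged into one kernel-verified Lean document; each statement's English description precedes it below -/
import Mathlib

section
/- Let Z be a norm-closed subspace of bounded operators between Hilbert spaces (a TRO, i.e. ZZ*Z ⊆ Z), let z ∈ Z be a tripotent (z = z z* z), and let b ∈ Z with ‖b‖ ≤ 1. If ‖z + b‖ ≤ 1 and ‖z - b‖ ≤ 1, then b = (1 - z z*) b (1 - z* z). -/
open ContinuousLinearMap

/-- Auxiliary lemma: for a tripotent `z` and `b` with `‖z ± b‖ ≤ 1`,
we have `b ∘ (z* ∘ z) = 0`. -/
theorem TRO_aux {𝕜 : Type*} [RCLike 𝕜] {K H : Type*}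
    [NormedAddCommGroup K] [InnerProductSpace 𝕜 K] [CompleteSpace K]
    [NormedAddCommGroup H] [InnerProductSpace 𝕜 H] [CompleteSpace H]
    (z b : K →L[𝕜] H)
    (htri : z.comp ((adjoint z).comp z) = z)
    (hplus : ‖z + b‖ ≤ 1) (hminus : ‖z - b‖ ≤ 1) :
    b.comp ((adjoint z).comp z) = 0 := by
  ext ξ
  set w := (adjoint z) (z ξ) with hw
  have hqw : (adjoint z) (z w) = w := by
    have := congrArg (fun A => (adjoint z) (A ξ)) htri
    simpa [comp_apply] using this
  have hinner : (inner 𝕜 (z w) (z w) : 𝕜) = inner 𝕜 w w := by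
    rw [← adjoint_inner_left, hqw]
  have hnorm : ‖z w‖ = ‖w‖ := by
    have h1 : (‖z w‖ : ℝ)^2 = ‖w‖^2 := by
      have := congrArg RCLike.re hinner
      rwa [inner_self_eq_norm_sq, inner_self_eq_norm_sq] at this
    nlinarith [norm_nonneg (z w), norm_nonneg w]
  have hpar := parallelogram_law_with_norm 𝕜 (z w) (b w)
  have h1 : ‖z w + b w‖ ≤ ‖w‖ := by
    calc ‖z w + b w‖ = ‖(z + b) w‖ := by simp
    _ ≤ ‖z + b‖ * ‖w‖ := le_opNorm _ _
    _ ≤ 1 * ‖w‖ := by gcongr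
    _ = ‖w‖ := one_mul _
  have h2 : ‖z w - b w‖ ≤ ‖w‖ := by
    calc ‖z w - b w‖ = ‖(z - b) w‖ := by simp
    _ ≤ ‖z - b‖ * ‖w‖ := le_opNorm _ _
    _ ≤ 1 * ‖w‖ := by gcongr
    _ = ‖w‖ := one_mul _
  have h1' : ‖z w + b w‖ * ‖z w + b w‖ ≤ ‖w‖ * ‖w‖ :=
    mul_self_le_mul_self (norm_nonneg _) h1
  have h2' : ‖z w - b w‖ * ‖z w - b w‖ ≤ ‖w‖ * ‖w‖ :=
    mul_self_le_mul_self (norm_nonneg _) h2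
  rw [hnorm] at hpar
  have hb0 : ‖b w‖ = 0 := by
    have : ‖b w‖ * ‖b w‖ ≤ 0 := by linarith
    exact mul_self_eq_zero.mp (le_antisymm this (mul_self_nonneg _))
  simp only [comp_apply, zero_apply, ← hw]
  exact norm_eq_zero.mp hb0

/-- TRO orthogonality lemma. -/
theorem stmt_0 {𝕜 : Type*} [RCLike 𝕜] {K H : Type*}
    [NormedAddCommGroup K] [InnerProductSpace 𝕜 K] [CompleteSpace K]
    [NormedAddCommGroup H] [InnerProductSpace 𝕜 H] [CompleteSpace H]
    (Z : Submodule 𝕜 (K →L[𝕜] H)) (hZclosed : IsClosed (Z : Set (K →L[𝕜] H)))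
    (hTRO : ∀ x ∈ Z, ∀ y ∈ Z, ∀ w ∈ Z, (x.comp ((adjoint y).comp w)) ∈ Z)
    (z b : K →L[𝕜] H) (hz : z ∈ Z) (hb : b ∈ Z)
    (htri : z.comp ((adjoint z).comp z) = z)
    (hbnorm : ‖b‖ ≤ 1)
    (hplus : ‖z + b‖ ≤ 1) (hminus : ‖z - b‖ ≤ 1) :
    b = ((1 - z.comp (adjoint z)).comp b).comp (1 - (adjoint z).comp z) := by
  -- b ∘ (z* z) = 0
  have hbq : b.comp ((adjoint z).comp z) = 0 := TRO_aux z b htri hplus hminus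
  -- tripotency of z*
  have htri' : (adjoint z).comp ((adjoint (adjoint z)).comp (adjoint z)) = adjoint z := by
    have := congrArg (fun A => ContinuousLinearMap.adjoint A) htri
    simp only [adjoint_comp, adjoint_adjoint] at this ⊢
    rw [← comp_assoc]
    exact this
  have hplus' : ‖adjoint z + adjoint b‖ ≤ 1 := by
    rw [← map_add]
    calc ‖ContinuousLinearMap.adjoint (z + b)‖ = ‖z + b‖ := adjoint.norm_map _
    _ ≤ 1 := hplus
  have hminus' : ‖adjoint z - adjoint b‖ ≤ 1 := by
    rw [← map_sub]
    calc ‖ContinuousLinearMap.adjoint (z - b)‖ = ‖z - b‖ := adjoint.norm_map _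
    _ ≤ 1 := hminus
  have hbp' : (adjoint b).comp ((adjoint (adjoint z)).comp (adjoint z)) = 0 :=
    TRO_aux (adjoint z) (adjoint b) htri' hplus' hminus'
  -- take adjoints : (z z*) ∘ b = 0
  have hpb : (z.comp (adjoint z)).comp b = 0 := by
    have := congrArg (fun A => ContinuousLinearMap.adjoint A) hbp'
    simpa [adjoint_comp, adjoint_adjoint, comp_assoc] using this
  -- expand
  simp [sub_comp, comp_sub, comp_assoc, hbq, hpb, one_def]
end

section
/- Let A be a unital Banach algebra and P : A → A a linear idempotent such that ‖x‖ = max{‖P x‖, ‖x - P x‖} for all x ∈ A (an M-projection). Then for every contractive unital linear functional φ on A, φ(P(1)) ≥ 0. -/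
lemma exists_phase {𝕜 : Type*} [RCLike 𝕜] (a : 𝕜) :
    ∃ c : 𝕜, ‖c‖ ≤ 1 ∧ c * a = (‖a‖ : 𝕜) := by
  by_cases h : a = 0
  · exact ⟨1, by simp [h]⟩
  · refine ⟨(‖a‖ : 𝕜) / a, ?_, div_mul_cancel₀ _ h⟩
    rw [norm_div, RCLike.norm_ofReal, abs_of_nonneg (norm_nonneg a),
      div_self (norm_ne_zero_iff.2 h)]

/-- for an M-projection P on a unital Banach algebra and a
contractive unital functional φ, one has φ(P(1)) ≥ 0 (a nonnegative real). -/
theorem stmt_6 {𝕜 : Type*} [RCLike 𝕜] {A : Type*} [NormedRing A]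
    [NormOneClass A] [NormedAlgebra 𝕜 A]
    (P : A →L[𝕜] A) (hP2 : ∀ x, P (P x) = P x)
    (hM : ∀ x : A, ‖x‖ = max ‖P x‖ ‖x - P x‖)
    (φ : A →L[𝕜] 𝕜) (hφ : ‖φ‖ ≤ 1) (hφ1 : φ 1 = 1) :
    ∃ r : ℝ, 0 ≤ r ∧ φ (P 1) = (r : 𝕜) := by
  set a : 𝕜 := φ (P 1) with ha
  set b : 𝕜 := φ (1 - P 1) with hb
  have hab : a + b = 1 := by
    rw [ha, hb, ← map_add, add_sub_cancel, hφ1]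
  obtain ⟨c, hc, hca⟩ := exists_phase a
  obtain ⟨d, hd, hdb⟩ := exists_phase b
  set z : A := c • P 1 + d • (1 - P 1) with hz
  have hPz : P z = c • P 1 := by
    rw [hz, map_add, map_smul, map_smul, map_sub, hP2]
    simp
  have hzPz : z - P z = d • (1 - P 1) := by
    rw [hPz, hz]; abel
  have hznorm : ‖z‖ ≤ 1 := by
    rw [hM z, hzPz, hPz, norm_smul, norm_smul]
    have h1 : ‖P 1‖ ≤ 1 := by
      have := hM 1; rw [norm_one] at this
      exact le_of_max_le_left this.ge
    have h2 : ‖(1 : A) - P 1‖ ≤ 1 := by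
      have := hM 1; rw [norm_one] at this
      exact le_of_max_le_right this.ge
    apply max_le
    · exact mul_le_one₀ hc (norm_nonneg _) h1
    · exact mul_le_one₀ hd (norm_nonneg _) h2
  have hφz : φ z = (‖a‖ : 𝕜) + (‖b‖ : 𝕜) := by
    rw [hz, map_add, map_smul, map_smul, smul_eq_mul, smul_eq_mul, ← ha, ← hb, hca, hdb]
  have hsum : ‖a‖ + ‖b‖ ≤ 1 := by
    have h1 : ‖φ z‖ ≤ ‖φ‖ * ‖z‖ := φ.le_opNorm z
    have h2 : ‖φ z‖ ≤ 1 := h1.trans (by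
      calc ‖φ‖ * ‖z‖ ≤ 1 * 1 := by
            apply mul_le_mul hφ hznorm (norm_nonneg _) (le_trans (norm_nonneg _) hφ)
        _ = 1 := one_mul 1)
    rw [hφz, ← RCLike.ofReal_add, RCLike.norm_ofReal,
      abs_of_nonneg (by positivity)] at h2
    exact h2
  -- re a + re b = 1
  have hre : RCLike.re a + RCLike.re b = 1 := by
    rw [← map_add, hab]; simp
  have hreb : RCLike.re b ≤ ‖b‖ := RCLike.re_le_norm b
  have hrea_ge : ‖a‖ ≤ RCLike.re a := by linarith
  have hrea_le : RCLike.re a ≤ ‖a‖ := RCLike.re_le_norm a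
  have hrea : RCLike.re a = ‖a‖ := le_antisymm hrea_le hrea_ge
  have hima : RCLike.im a = 0 := by
    have hsq : ‖a‖ ^ 2 = RCLike.re a * RCLike.re a + RCLike.im a * RCLike.im a :=
      RCLike.norm_sq_eq_def
    rw [hrea, pow_two] at hsq
    have him2 : RCLike.im a * RCLike.im a = 0 := by linarith
    exact mul_self_eq_zero.mp him2
  refine ⟨‖a‖, norm_nonneg a, ?_⟩
  rw [ha] at hrea hima ⊢
  apply RCLike.ext
  · simp [hrea]
  · simp [hima]
end

section
/- Define P : ℍ → ℍ by P(α) = (α + ᾱ)/2. Then P is an idempotent ℝ-linear map satisfying ‖P(α)‖² + ‖α - P(α)‖² = ‖α‖² for all α ∈ ℍ, but there do not exist h, k ∈ ℍ with h̄ = h, k̄ = k, and P(x) = hx + xk for all x ∈ ℍ. -/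
open Quaternion

/-- the selfadjoint-part map P(α) = (α + ᾱ)/2 on ℍ is an
idempotent real-linear map satisfying the Pythagorean identity, but is not of
the form x ↦ hx + xk for selfadjoint h, k. -/
theorem stmt_10 (P : ℍ[ℝ] → ℍ[ℝ]) (hP : ∀ α, P α = (α + star α) / 2) :
    (∀ α, P (P α) = P α) ∧
      (∀ α β : ℍ[ℝ], P (α + β) = P α + P β) ∧
      (∀ (r : ℝ) (α : ℍ[ℝ]), P (r • α) = r • P α) ∧
      (∀ α : ℍ[ℝ], ‖P α‖ ^ 2 + ‖α - P α‖ ^ 2 = ‖α‖ ^ 2) ∧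
      ¬ ∃ h k : ℍ[ℝ], star h = h ∧ star k = k ∧ ∀ x : ℍ[ℝ], P x = h * x + x * k := by
  have key : ∀ α : ℍ[ℝ], P α = ((α.re : ℝ) : ℍ[ℝ]) := by
    intro α
    rw [hP, Quaternion.self_add_star']
    have h2 : ((2 : ℝ) : ℍ[ℝ]) = 2 := by norm_cast
    rw [← h2, ← Quaternion.coe_div]
    norm_num
  refine ⟨fun α => ?_, fun α β => ?_, fun r α => ?_, fun α => ?_, ?_⟩
  · simp [key]
  · simp [key]
  · simp only [key, Quaternion.re_smul, smul_eq_mul, Quaternion.coe_mul]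
    ext <;> simp
  · rw [key, sq, sq, sq, ← Quaternion.normSq_eq_norm_mul_self,
      ← Quaternion.normSq_eq_norm_mul_self, ← Quaternion.normSq_eq_norm_mul_self]
    simp [Quaternion.normSq_def', Quaternion.ext_iff]
    ring
  · rintro ⟨h, k, hh, hk, heq⟩
    rw [Quaternion.ext_iff] at hh hk
    have hI : h.imI = 0 := by have := hh.2.1; simp at this; linarith
    have hJ : h.imJ = 0 := by have := hh.2.2.1; simp at this; linarith
    have hK : h.imK = 0 := by have := hh.2.2.2; simp at this; linarith
    have kI : k.imI = 0 := by have := hk.2.1; simp at this; linarith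
    have kJ : k.imJ = 0 := by have := hk.2.2.1; simp at this; linarith
    have kK : k.imK = 0 := by have := hk.2.2.2; simp at this; linarith
    have h1 := key 1 ▸ heq 1
    have hi := key ⟨0,1,0,0⟩ ▸ heq ⟨0,1,0,0⟩
    rw [Quaternion.ext_iff] at h1 hi
    simp only [Quaternion.re_add, Quaternion.imI_add, Quaternion.re_mul, Quaternion.imI_mul,
      Quaternion.re_coe, Quaternion.imI_coe, Quaternion.re_one, Quaternion.imI_one,
      Quaternion.imJ_one, Quaternion.imK_one, hI, hJ, hK, kI, kJ, kK] at h1 hi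
    obtain ⟨e1, -⟩ := h1
    obtain ⟨-, e2, -⟩ := hi
    erw [Quaternion.imI_mul, Quaternion.imI_mul] at e2
    simp [hI, hJ, hK, kI, kJ, kK] at e1 e2
    nlinarith
end

section
/- Let A be a unital complex C*-algebra, P an M-projection on A, z = P(1), and φ a state on A with φ(z) ≠ 0. Then ψ := ‖P*φ‖^{-1} P*φ is a state on A and ψ(z) = 1. -/
/-- A unit complex number rotating `w` onto its norm. -/
lemma exists_unit_mul_eq_norm (w : ℂ) : ∃ c : ℂ, ‖c‖ = 1 ∧ c * w = (‖w‖ : ℂ) := by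
  by_cases h : w = 0
  · exact ⟨1, by simp [h]⟩
  · have hw : ‖w‖ ≠ 0 := norm_ne_zero_iff.mpr h
    refine ⟨(‖w‖ : ℂ) / w, ?_, by field_simp⟩
    rw [norm_div, Complex.norm_real, norm_norm, div_self (by simpa using hw)]

lemma re_eq_abs_imp (w : ℂ) (h : w.re = ‖w‖) : w = (‖w‖ : ℂ) := by
  have h1 : ‖w‖ ^ 2 = w.re ^ 2 + w.im ^ 2 := by
    rw [← Complex.normSq_eq_norm_sq, Complex.normSq_apply]; ring
  have hsq : w.im ^ 2 = 0 := by rw [h] at h1; linarith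
  have him : w.im = 0 := by
    have := sq_nonneg w.im
    nlinarith
  rw [← h]
  exact Complex.ext (by simp) (by simp [him])

/-- if P is an M-projection on a unital C*-algebra, z = P(1), and
φ is a state with φ(z) ≠ 0, then ψ = ‖P*φ‖⁻¹ P*φ is a state with ψ(z) = 1. -/
theorem stmt_19 {A : Type*} [NormedRing A] [StarRing A] [CStarRing A]
    [CompleteSpace A] [NormedAlgebra ℂ A] [StarModule ℂ A]
    (P : A →L[ℂ] A) (hP2 : ∀ x, P (P x) = P x)
    (hM : ∀ x : A, ‖x‖ = max ‖P x‖ ‖x - P x‖)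
    (z : A) (hz : P 1 = z)
    (φ : A →L[ℂ] ℂ) (hφnorm : ‖φ‖ = 1) (hφ1 : φ 1 = 1)
    (hφz : φ z ≠ 0) :
    ‖(‖φ.comp P‖⁻¹ : ℝ) • φ.comp P‖ = 1 ∧
      ((‖φ.comp P‖⁻¹ : ℝ) • φ.comp P) 1 = 1 ∧
      ((‖φ.comp P‖⁻¹ : ℝ) • φ.comp P) z = 1 := by
  have hPle : ∀ x : A, ‖P x‖ ≤ ‖x‖ := fun x => (hM x).symm ▸ le_max_left _ _
  have hQle : ∀ x : A, ‖x - P x‖ ≤ ‖x‖ := fun x => (hM x).symm ▸ le_max_right _ _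
  -- key inequality
  have key : ∀ x y : A, ‖φ (P x)‖ + ‖φ y - φ (P y)‖ ≤ max ‖x‖ ‖y‖ := by
    intro x y
    obtain ⟨c, hc1, hc2⟩ := exists_unit_mul_eq_norm (φ (P x))
    obtain ⟨d, hd1, hd2⟩ := exists_unit_mul_eq_norm (φ y - φ (P y))
    set u : A := P (c • x) + ((d • y) - P (d • y)) with hu
    have hPu : P u = P (c • x) := by
      simp [hu, map_add, map_sub, hP2]
    have hnu : ‖u‖ ≤ max ‖x‖ ‖y‖ := by
      rw [hM u, hPu]
      have h1 : ‖P (c • x)‖ ≤ ‖x‖ := by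
        calc ‖P (c • x)‖ ≤ ‖c • x‖ := hPle _
        _ = ‖x‖ := by rw [norm_smul, hc1, one_mul]
      have h2 : ‖u - P (c • x)‖ ≤ ‖y‖ := by
        have : u - P (c • x) = (d • y) - P (d • y) := by rw [hu]; abel
        rw [this]
        calc ‖(d • y) - P (d • y)‖ ≤ ‖d • y‖ := hQle _
        _ = ‖y‖ := by rw [norm_smul, hd1, one_mul]
      exact max_le (h1.trans (le_max_left _ _)) (h2.trans (le_max_right _ _))
    have hφu : φ u = (‖φ (P x)‖ + ‖φ y - φ (P y)‖ : ℝ) := by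
      have : φ u = c * φ (P x) + d * (φ y - φ (P y)) := by
        simp [hu, map_add, map_sub, map_smul, smul_eq_mul]
        ring
      rw [this, hc2, hd2]
      push_cast
      ring
    have hb : ‖φ u‖ ≤ max ‖x‖ ‖y‖ := by
      calc ‖φ u‖ ≤ ‖φ‖ * ‖u‖ := φ.le_opNorm u
      _ ≤ max ‖x‖ ‖y‖ := by rw [hφnorm, one_mul]; exact hnu
    have : ‖φ u‖ = ‖φ (P x)‖ + ‖φ y - φ (P y)‖ := by
      rw [hφu, Complex.norm_real, Real.norm_eq_abs, abs_of_nonneg (by positivity)]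
    linarith [this ▸ hb]
  -- norm of composition plus complement ≤ 1
  have hsum : ∀ y : A, ‖y‖ ≤ 1 → ‖φ.comp P‖ ≤ 1 - ‖φ y - φ (P y)‖ := by
    intro y hy
    refine ContinuousLinearMap.opNorm_le_bound _ ?_ ?_
    · have h := key 0 y
      simp only [map_zero, norm_zero, zero_add, max_eq_right (norm_nonneg y)] at h
      linarith [h.trans hy]
    · intro x
      rcases eq_or_lt_of_le (norm_nonneg x) with h0 | h0
      · have : x = 0 := norm_eq_zero.mp h0.symm
        simp [this]
      · have hk := key x (‖x‖ • y)
        have hyx : ‖‖x‖ • y‖ ≤ ‖x‖ := by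
          rw [norm_smul, Real.norm_eq_abs, abs_of_pos h0]
          nlinarith
        have hmax : max ‖x‖ ‖‖x‖ • y‖ = ‖x‖ := max_eq_left hyx
        rw [hmax] at hk
        have hsc : ‖φ (‖x‖ • y) - φ (P (‖x‖ • y))‖ = ‖x‖ * ‖φ y - φ (P y)‖ := by
          have : φ (‖x‖ • y) - φ (P (‖x‖ • y)) = (‖x‖ : ℝ) • (φ y - φ (P y)) := by
            simp [map_smul, smul_sub]
          rw [this, norm_smul, Real.norm_eq_abs, abs_of_pos h0]
        rw [hsc] at hk
        simp only [ContinuousLinearMap.comp_apply]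
        nlinarith
  -- norm of 1 in A
  have hA1 : ‖(1:A)‖ = 1 := by
    have hmul : ‖(1:A)‖ * ‖(1:A)‖ = ‖(1:A)‖ := by
      have := CStarRing.norm_star_mul_self (x := (1:A))
      simpa using this.symm
    have hne : (1:A) ≠ 0 := by
      intro h
      apply hφz
      rw [← hz, ← hP2 1, h]
      simp
    have : ‖(1:A)‖ ≠ 0 := norm_ne_zero_iff.mpr hne
    field_simp at hmul
    tauto
  -- equality analysis at 1
  have hone : (1 : ℂ) = φ (P 1) + (φ 1 - φ (P 1)) := by ring_nf; rw [hφ1]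
  have h1n : (1 : ℝ) ≤ ‖φ (P 1)‖ + ‖φ 1 - φ (P 1)‖ := by
    calc (1:ℝ) = ‖(1:ℂ)‖ := by simp
    _ = ‖φ (P 1) + (φ 1 - φ (P 1))‖ := by rw [← hone]
    _ ≤ _ := norm_add_le _ _
  have hg1 : ‖φ 1 - φ (P 1)‖ ≤ 1 - ‖φ.comp P‖ := by
    have := hsum 1 (le_of_eq hA1)
    linarith
  have hP1 : ‖φ (P 1)‖ ≤ ‖φ.comp P‖ := by
    have := (φ.comp P).le_opNorm 1
    rw [hA1, mul_one] at this
    simpa using this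
  -- all equalities
  have heq1 : ‖φ (P 1)‖ = ‖φ.comp P‖ := le_antisymm hP1 (by linarith)
  have heq2 : ‖φ (P 1)‖ + ‖φ 1 - φ (P 1)‖ = 1 := le_antisymm (by linarith) h1n
  -- re of φ(P 1) equals its norm
  have hre : (φ (P 1)).re = ‖φ (P 1)‖ := by
    have hre1 : (φ (P 1)).re + (φ 1 - φ (P 1)).re = 1 := by
      have : ((1:ℂ)).re = (φ (P 1) + (φ 1 - φ (P 1))).re := by rw [← hone]
      simpa using this.symm
    have h1 : (φ (P 1)).re ≤ ‖φ (P 1)‖ := Complex.re_le_norm _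
    have h2 : (φ 1 - φ (P 1)).re ≤ ‖φ 1 - φ (P 1)‖ := Complex.re_le_norm _
    linarith
  have hval : φ (P 1) = (‖φ.comp P‖ : ℂ) := by
    rw [← heq1]; exact re_eq_abs_imp _ hre
  have hr0 : ‖φ.comp P‖ ≠ 0 := by
    intro h
    apply hφz
    rw [← hz, hval, h, Complex.ofReal_zero]
  have hrpos : (0:ℝ) < ‖φ.comp P‖ := lt_of_le_of_ne (norm_nonneg _) (Ne.symm hr0)
  refine ⟨?_, ?_, ?_⟩
  · have hns := norm_smul (‖φ.comp P‖⁻¹ : ℝ) (φ.comp P)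
    rw [hns, Real.norm_eq_abs, abs_of_pos (inv_pos.mpr hrpos), inv_mul_cancel₀ hr0]
  · simp only [ContinuousLinearMap.smul_apply, ContinuousLinearMap.comp_apply, hval,
      Complex.real_smul]
    rw [← Complex.ofReal_mul, inv_mul_cancel₀ hr0, Complex.ofReal_one]
  · have hPz : P z = P 1 := by rw [← hz, hP2]
    simp only [ContinuousLinearMap.smul_apply, ContinuousLinearMap.comp_apply, hPz, hval,
      Complex.real_smul]
    rw [← Complex.ofReal_mul, inv_mul_cancel₀ hr0, Complex.ofReal_one]
end
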